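/- Let A be a plus-one generated line arrangement in ℂ³ with exponents (a, b) and level d, with a ≤ b < d. If H, L ∈ A are hyperplanes such that both Ziegler restrictions (A^H, m^H) and (A^L, m^L) have exponents (a+b−d−1, d), then H = L. -/

import Mathlib

noncomputable section

open MvPolynomial

/-- The polynomial ring `S = ℂ[x,y,z]`. -/
abbrev S3 : Type := MvPolynomial (Fin 3) ℂ
/-- The polynomial ring in two variables, coordinate ring of a plane `H`. -/
abbrev S2 : Type := MvPolynomial (Fin 2) ℂ

/-- The linear form with coefficient vector `v`. -/
def lin3 (v : Fin 3 → ℂ) : S3 := ∑ i, MvPolynomial.C (v i) * MvPolynomial.X i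
/-- The linear form with coefficient vector `u` in two variables. -/
def lin2 (u : Fin 2 → ℂ) : S2 := ∑ i, MvPolynomial.C (u i) * MvPolynomial.X i

/-- Value of the derivation `θ = ∑ θᵢ ∂ᵢ` on the linear form with coefficients `v`. -/
def ev3 (θ : Fin 3 → S3) (v : Fin 3 → ℂ) : S3 := ∑ i, MvPolynomial.C (v i) * θ i
/-- Two-variable analogue of `ev3`. -/
def ev2 (θ : Fin 2 → S2) (u : Fin 2 → ℂ) : S2 := ∑ i, MvPolynomial.C (u i) * θ i

lemma ev3_add (θ η : Fin 3 → S3) (v : Fin 3 → ℂ) :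
    ev3 (θ + η) v = ev3 θ v + ev3 η v := by
  simp [ev3, mul_add, Finset.sum_add_distrib]

lemma ev3_smul (c : S3) (θ : Fin 3 → S3) (v : Fin 3 → ℂ) :
    ev3 (c • θ) v = c * ev3 θ v := by
  simp only [ev3, Pi.smul_apply, smul_eq_mul, Finset.mul_sum]
  exact Finset.sum_congr rfl fun i _ => by ring

lemma ev2_add (θ η : Fin 2 → S2) (u : Fin 2 → ℂ) :
    ev2 (θ + η) u = ev2 θ u + ev2 η u := by
  simp [ev2, mul_add, Finset.sum_add_distrib]

lemma ev2_smul (c : S2) (θ : Fin 2 → S2) (u : Fin 2 → ℂ) :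
    ev2 (c • θ) u = c * ev2 θ u := by
  simp only [ev2, Pi.smul_apply, smul_eq_mul, Finset.mul_sum]
  exact Finset.sum_congr rfl fun i _ => by ring

/-- A central line arrangement in `ℂ³`, given by the coefficient vectors of the defining
linear forms of its planes; the forms are nonzero and pairwise non-proportional. -/
structure Arr where
  hyps : Finset (Fin 3 → ℂ)
  forms_ne : ∀ v ∈ hyps, v ≠ 0
  nonprop : ∀ v ∈ hyps, ∀ w ∈ hyps, (∃ c : ℂ, w = c • v) → w = v

/-- The module `D(A)` of logarithmic derivations of the arrangement `A`, as a submodule of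
`Der S = S ∂x ⊕ S ∂y ⊕ S ∂z` (a derivation is recorded by its coefficient triple). -/
def DA (A : Arr) : Submodule S3 (Fin 3 → S3) where
  carrier := {θ | ∀ v ∈ A.hyps, lin3 v ∣ ev3 θ v}
  add_mem' := fun hθ hη v hv => by rw [ev3_add]; exact dvd_add (hθ v hv) (hη v hv)
  zero_mem' := fun v hv => by simp [ev3]
  smul_mem' := fun c θ hθ v hv => by rw [ev3_smul]; exact Dvd.dvd.mul_left (hθ v hv) c

/-- The Euler derivation `θ_E = x ∂x + y ∂y + z ∂z`. -/
def eulerD : Fin 3 → S3 := fun i => MvPolynomial.X i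

/-- The submodule `D_H(A) = {θ ∈ D(A) | θ(α_H) = 0}`, where `H` has coefficient vector `v`. -/
def DH (A : Arr) (v : Fin 3 → ℂ) : Submodule S3 (Fin 3 → S3) where
  carrier := {θ | (∀ w ∈ A.hyps, lin3 w ∣ ev3 θ w) ∧ ev3 θ v = 0}
  add_mem' := fun hθ hη => ⟨fun w hw => by rw [ev3_add]; exact dvd_add (hθ.1 w hw) (hη.1 w hw),
    by rw [ev3_add, hθ.2, hη.2, add_zero]⟩
  zero_mem' := ⟨fun w hw => by simp [ev3], by simp [ev3]⟩
  smul_mem' := fun c θ hθ => ⟨fun w hw => by rw [ev3_smul]; exact Dvd.dvd.mul_left (hθ.1 w hw) c,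
    by rw [ev3_smul, hθ.2, mul_zero]⟩

/-- A derivation is homogeneous of (polynomial) degree `k` if all its coefficients are. -/
def HomDeg3 (θ : Fin 3 → S3) (k : ℕ) : Prop := ∀ i, (θ i).IsHomogeneous k
/-- Two-variable analogue of `HomDeg3`. -/
def HomDeg2 (θ : Fin 2 → S2) (k : ℕ) : Prop := ∀ i, (θ i).IsHomogeneous k

/-- `A` is plus-one generated with exponents `(a, b)` and level `d`: `D(A)` has a minimal
homogeneous generating set `{θ_E, θ₂, θ₃, φ}` of degrees `1, a, b, d` with a unique
homogeneous relation `f₁θ_E + f₂θ₂ + f₃θ₃ + αφ = 0`, `α` a nonzero linear form. -/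
def IsPOG (A : Arr) (a b d : ℕ) : Prop :=
  ∃ θ₂ θ₃ φ : Fin 3 → S3,
    HomDeg3 θ₂ a ∧ HomDeg3 θ₃ b ∧ HomDeg3 φ d ∧
    Submodule.span S3 ({eulerD, θ₂, θ₃, φ} : Set (Fin 3 → S3)) = DA A ∧
    eulerD ∉ Submodule.span S3 ({θ₂, θ₃, φ} : Set (Fin 3 → S3)) ∧
    θ₂ ∉ Submodule.span S3 ({eulerD, θ₃, φ} : Set (Fin 3 → S3)) ∧
    θ₃ ∉ Submodule.span S3 ({eulerD, θ₂, φ} : Set (Fin 3 → S3)) ∧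
    φ ∉ Submodule.span S3 ({eulerD, θ₂, θ₃} : Set (Fin 3 → S3)) ∧
    ∃ f₁ f₂ f₃ α : S3, α ≠ 0 ∧ α.IsHomogeneous 1 ∧
      f₁ • eulerD + f₂ • θ₂ + f₃ • θ₃ + α • φ = 0 ∧
      ∀ g₁ g₂ g₃ g₄ : S3,
        g₁ • eulerD + g₂ • θ₂ + g₃ • θ₃ + g₄ • φ = 0 →
        ∃ h : S3, g₁ = h * f₁ ∧ g₂ = h * f₂ ∧ g₃ = h * f₃ ∧ g₄ = h * α

/-- `A` is nearly free with exponents `(a, b)`: plus-one generated with level `d = b`. -/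
def IsNearlyFree (A : Arr) (a b : ℕ) : Prop := IsPOG A a b b

/-- `A` is free with exponents `(1, a, b)`: `D(A)` has a homogeneous basis
`{θ_E, θ₁, θ₂}` of degrees `1, a, b`. -/
def IsFree (A : Arr) (a b : ℕ) : Prop :=
  ∃ θ₁ θ₂ : Fin 3 → S3, HomDeg3 θ₁ a ∧ HomDeg3 θ₂ b ∧
    Submodule.span S3 ({eulerD, θ₁, θ₂} : Set (Fin 3 → S3)) = DA A ∧
    ∀ f g h : S3, f • eulerD + g • θ₁ + h • θ₂ = 0 → f = 0 ∧ g = 0 ∧ h = 0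

/-- The projective plane `ℙ² = ℙ(ℂ³)`. -/
abbrev PP : Type := Projectivization ℂ (Fin 3 → ℂ)

/-- The projective point `p` lies on the line defined by the linear form with coefficients `v`. -/
def pOn (v : Fin 3 → ℂ) (p : PP) : Prop := ∑ i, v i * p.rep i = 0

/-- The number `n_H` of intersection points of `A` lying on the line `H` (coefficients `v`). -/
def nPoints (A : Arr) (v : Fin 3 → ℂ) : ℕ :=
  Set.ncard {p : PP | pOn v p ∧ ∃ w ∈ A.hyps, w ≠ v ∧ pOn w p}

/-- The multiplicity `m(X)` of a projective point: the number of lines of `A` through it. -/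
def multPt (A : Arr) (p : PP) : ℕ :=
  Set.ncard {w : Fin 3 → ℂ | w ∈ A.hyps ∧ pOn w p}

/-- The maximal multiplicity `m(A)` of an intersection point of `A`. -/
def mMax (A : Arr) : ℕ := ⨆ p : PP, multPt A p

/-- `b₂⁰(A)`, the constant coefficient of `χ₀(A,t) = χ(A,t)/(t-1) = t² - (|A|-1)t + b₂⁰(A)`. -/
def b20 (A : Arr) : ℕ := (∑ᶠ p : PP, (multPt A p - 1)) - (A.hyps.card - 1)

/-- Deletion of a hyperplane from an arrangement. -/
def Arr.delete (A : Arr) (v : Fin 3 → ℂ) : Arr where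
  hyps := A.hyps.erase v
  forms_ne := fun w hw => A.forms_ne w (Finset.mem_of_mem_erase hw)
  nonprop := fun w hw u hu h =>
    A.nonprop w (Finset.mem_of_mem_erase hw) u (Finset.mem_of_mem_erase hu) h

/-- The restriction of the linear form `w` to the plane with basis `b`. -/
def restrForm (b : Fin 2 → Fin 3 → ℂ) (w : Fin 3 → ℂ) : Fin 2 → ℂ :=
  fun j => ∑ i, w i * b j i

/-- The Ziegler multiplicity of the point `H ∩ H_w` on the line `H` (coefficients `v`):
the number of hyperplanes of `A` other than `H` passing through this point. -/
def multOn (A : Arr) (v : Fin 3 → ℂ) (b : Fin 2 → Fin 3 → ℂ) (w : Fin 3 → ℂ) : ℕ :=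
  Set.ncard {w' : Fin 3 → ℂ | w' ∈ A.hyps ∧ w' ≠ v ∧
    ∃ c : ℂ, restrForm b w' = c • restrForm b w}

/-- The derivation module `D(A^H, m^H)` of the Ziegler (multi)restriction of `A` onto the
line with coefficients `v`, computed in the coordinates given by the basis `b` of `H`.
(For `v ∉ A` this is the multirestriction with multiplicities `m(X) = #{K ∈ A | X ⊂ K}`.) -/
def DZ (A : Arr) (v : Fin 3 → ℂ) (b : Fin 2 → Fin 3 → ℂ) : Submodule S2 (Fin 2 → S2) where
  carrier := {θ | ∀ w ∈ A.hyps, w ≠ v →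
    (lin2 (restrForm b w)) ^ (multOn A v b w) ∣ ev2 θ (restrForm b w)}
  add_mem' := fun hθ hη w hw hwv => by rw [ev2_add]; exact dvd_add (hθ w hw hwv) (hη w hw hwv)
  zero_mem' := fun w hw hwv => by simp [ev2]
  smul_mem' := fun c θ hθ w hw hwv => by rw [ev2_smul]; exact Dvd.dvd.mul_left (hθ w hw hwv) c

/-- `(e₁, e₂)` is the splitting type of the logarithmic bundle of `A` along the line `v`;
by Yoshinaga's theorem this is expressed through the exponents of the corresponding
(multi)restriction: `D(A^H, m^H)` has a homogeneous basis of degrees `e₁`, `e₂`. -/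
def SplitTypeIs (A : Arr) (v : Fin 3 → ℂ) (e₁ e₂ : ℕ) : Prop :=
  ∃ b : Fin 2 → (Fin 3 → ℂ), LinearIndependent ℂ b ∧ (∀ j, ∑ i, v i * b j i = 0) ∧
    ∃ θ₁ θ₂ : Fin 2 → S2, HomDeg2 θ₁ e₁ ∧ HomDeg2 θ₂ e₂ ∧
      Submodule.span S2 ({θ₁, θ₂} : Set (Fin 2 → S2)) = DZ A v b ∧
      ∀ f g : S2, f • θ₁ + g • θ₂ = 0 → f = 0 ∧ g = 0

/-- For `v ∈ A`, the splitting type along `v` is exactly the pair of exponents of the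
Ziegler restriction `(A^H, m^H)`. -/
abbrev ZieglerExpsAre (A : Arr) (v : Fin 3 → ℂ) (e₁ e₂ : ℕ) : Prop := SplitTypeIs A v e₁ e₂

/-- A generic line arrangement: all intersection points in `ℙ²` are double points. -/
def IsGeneric (A : Arr) : Prop := ∀ p : PP, multPt A p ≤ 2


-- ===== Part A =====

/-- dual vectors to an independent pair in ℂ³ -/
lemma exists_dual (b : Fin 2 → Fin 3 → ℂ) (hb : LinearIndependent ℂ b) :
    ∃ m : Fin 2 → Fin 3 → ℂ, ∀ j k, dotProduct (m j) (b k) = if j = k then 1 else 0 := by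
  classical
  set inc : (Fin 2 → ℂ) →ₗ[ℂ] (Fin 3 → ℂ) := (Fintype.linearCombination ℂ) b with hinc
  have hinj : Function.Injective inc := by
    rw [← LinearMap.ker_eq_bot]
    rw [Fintype.linearIndependent_iff] at hb
    ext c
    simp only [Submodule.mem_bot, LinearMap.mem_ker]
    constructor
    · intro h; funext i; exact hb c h i
    · intro h; simp [h]
  have hsurj := LinearMap.dualMap_surjective_of_injective hinj
  have main : ∀ j : Fin 2, ∃ m : Fin 3 → ℂ, ∀ k, dotProduct m (b k) = if j = k then 1 else 0 := by
    intro j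
    obtain ⟨F, hF⟩ := hsurj (LinearMap.proj j)
    refine ⟨fun i => F (Pi.single i 1), fun k => ?_⟩
    have key : (∑ i, F (Pi.single i 1) * b k i) = F (b k) := by
      have h2 := LinearMap.pi_apply_eq_sum_univ F (b k)
      rw [h2]
      refine Finset.sum_congr rfl fun i _ => ?_
      rw [smul_eq_mul, mul_comm]
      congr 2
      funext t; by_cases h : i = t <;> simp [Pi.single_apply, h, eq_comm]
    have hbk : F (b k) = inc.dualMap F (Pi.single k 1) := by
      simp only [LinearMap.dualMap_apply]
      congr 1
      simp only [hinc, Fintype.linearCombination_apply]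
      rw [Finset.sum_eq_single k]
      · simp
      · intro j' _ hj'; simp [Pi.single_apply, hj']
      · simp
    simp only [dotProduct, key, hbk, hF, LinearMap.proj_apply, Pi.single_apply]
  obtain ⟨m0, hm0⟩ := main 0
  obtain ⟨m1, hm1⟩ := main 1
  refine ⟨![m0, m1], ?_⟩
  intro j k
  fin_cases j
  · simpa [dotProduct] using hm0 k
  · simpa [dotProduct] using hm1 k

/-- functionals annihilating an independent pair contained in ker v are multiples of v -/
lemma annih (v : Fin 3 → ℂ) (hv : v ≠ 0) (b : Fin 2 → Fin 3 → ℂ)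
    (hb : LinearIndependent ℂ b) (hvb : ∀ j, dotProduct v (b j) = 0)
    (c : Fin 3 → ℂ) (hc : ∀ j, dotProduct c (b j) = 0) :
    ∃ l : ℂ, c = l • v := by
  classical
  obtain ⟨i₀, hi₀⟩ : ∃ i, v i ≠ 0 := by
    by_contra h; push_neg at h; exact hv (funext h)
  set e : Fin 3 → ℂ := Pi.single i₀ 1 with he
  have hdot : ∀ x : Fin 3 → ℂ, dotProduct x e = x i₀ := by
    intro x
    simp [dotProduct, he, Pi.single_apply, Finset.sum_ite_eq]
  have henotmem : e ∉ Submodule.span ℂ (Set.range b) := by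
    intro hmem
    have hker : ∀ x ∈ Submodule.span ℂ (Set.range b), dotProduct v x = 0 := by
      intro x hx
      induction hx using Submodule.span_induction with
      | mem x hx => obtain ⟨j, rfl⟩ := hx; exact hvb j
      | zero => simp [dotProduct]
      | add x y _ _ hx hy => rw [dotProduct_add, hx, hy, add_zero]
      | smul a x _ hx => rw [dotProduct_smul, hx, smul_zero]
    have := hker e hmem
    rw [hdot] at this
    exact hi₀ this
  have htriple : LinearIndependent ℂ (Fin.cons e b : Fin 3 → Fin 3 → ℂ) :=
    linearIndependent_fin_cons.mpr ⟨hb, henotmem⟩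
  have hcard : Fintype.card (Fin 3) = Module.finrank ℂ (Fin 3 → ℂ) := by simp
  let B : Module.Basis (Fin 3) ℂ (Fin 3 → ℂ) := basisOfLinearIndependentOfCardEqFinrank htriple hcard
  have hB : ∀ i, B i = (Fin.cons e b : Fin 3 → Fin 3 → ℂ) i :=
    fun i => congrFun (coe_basisOfLinearIndependentOfCardEqFinrank htriple hcard) i
  set l := c i₀ / v i₀ with hl
  set c' := c - l • v with hc'
  have hc'ann : ∀ i, dotProduct c' (B i) = 0 := by
    intro i
    rw [hB]
    refine Fin.cases ?_ ?_ i
    · simp only [Fin.cons_zero, hc', sub_dotProduct, smul_dotProduct, hdot]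
      simp [hl, smul_eq_mul, div_mul_cancel₀ _ hi₀]
    · intro j
      simp only [Fin.cons_succ, hc', sub_dotProduct, smul_dotProduct, hc, hvb]
      simp
  have hc'0 : c' = 0 := by
    have hφ : ∀ x : Fin 3 → ℂ, dotProduct c' x = 0 := by
      set φ : (Fin 3 → ℂ) →ₗ[ℂ] ℂ :=
        { toFun := fun x => dotProduct c' x
          map_add' := fun x y => dotProduct_add c' x y
          map_smul' := fun a x => by simp [dotProduct_smul] } with hφdef
      have : φ = 0 := by
        apply Module.Basis.ext B
        intro i
        simpa [hφdef] using hc'ann i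
      intro x
      have := congrFun (congrArg (fun f => f.toFun) this) x
      simpa [hφdef] using this
    funext i
    have h1 := hφ (Pi.single i 1)
    have h2 : dotProduct c' (Pi.single i 1) = c' i := by
      simp [dotProduct, Pi.single_apply, Finset.sum_ite_eq]
    rw [h2] at h1
    simpa using h1
  exact ⟨l, sub_eq_zero.mp (by rw [← hc']; exact hc'0)⟩

/-- Every nonzero functional on ℂ³ has a 2-dimensional kernel with a basis. -/
lemma exists_ker_basis (v : Fin 3 → ℂ) (hv : v ≠ 0) :
    ∃ b : Fin 2 → Fin 3 → ℂ, LinearIndependent ℂ b ∧ ∀ j, dotProduct v (b j) = 0 := by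
  classical
  set φ : (Fin 3 → ℂ) →ₗ[ℂ] ℂ :=
    { toFun := fun x => dotProduct v x
      map_add' := fun x y => dotProduct_add v x y
      map_smul' := fun a x => by simp [dotProduct_smul] } with hφdef
  have hφsurj : LinearMap.range φ = ⊤ := by
    obtain ⟨i₀, hi₀⟩ : ∃ i, v i ≠ 0 := by
      by_contra h; push_neg at h; exact hv (funext h)
    rw [LinearMap.range_eq_top]
    intro c
    refine ⟨(c / v i₀) • (Pi.single i₀ 1 : Fin 3 → ℂ), ?_⟩
    simp only [hφdef, LinearMap.coe_mk, AddHom.coe_mk, dotProduct_smul]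
    have : dotProduct v (Pi.single i₀ 1) = v i₀ := by
      simp [dotProduct, Pi.single_apply, Finset.sum_ite_eq]
    rw [this]
    rw [smul_eq_mul, div_mul_cancel₀ _ hi₀]
  have hrank : Module.finrank ℂ (LinearMap.ker φ) = 2 := by
    have h1 := LinearMap.finrank_range_add_finrank_ker φ
    rw [hφsurj] at h1
    simp only [finrank_top] at h1
    have h2 : Module.finrank ℂ ℂ = 1 := Module.finrank_self ℂ
    have h3 : Module.finrank ℂ (Fin 3 → ℂ) = 3 := by simp
    omega
  let B : Module.Basis (Fin 2) ℂ (LinearMap.ker φ) := Module.finBasisOfFinrankEq ℂ _ hrank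
  refine ⟨fun j => (B j : Fin 3 → ℂ), ?_, ?_⟩
  · exact B.linearIndependent.map' (LinearMap.ker φ).subtype (Submodule.ker_subtype _)
  · intro j
    exact (B j).2
-- ===== Part B =====
section PartB
open MvPolynomial

lemma lin3_coeff (v : Fin 3 → ℂ) (i : Fin 3) :
    MvPolynomial.coeff (Finsupp.single i 1) (lin3 v) = v i := by
  simp [lin3, MvPolynomial.coeff_sum, MvPolynomial.coeff_C_mul, MvPolynomial.coeff_X',
    Finsupp.single_left_inj, Finset.sum_ite_eq]

lemma lin3_ne_zero {v : Fin 3 → ℂ} (hv : v ≠ 0) : lin3 v ≠ 0 := by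
  intro h
  apply hv
  funext i
  have := lin3_coeff v i
  rw [h] at this
  simpa using this.symm

lemma lin3_smul (c : ℂ) (v : Fin 3 → ℂ) : lin3 (c • v) = MvPolynomial.C c * lin3 v := by
  simp [lin3, Finset.mul_sum, MvPolynomial.C_mul, mul_assoc]

lemma lin3_single (i : Fin 3) : lin3 (Pi.single i 1) = MvPolynomial.X i := by
  simp [lin3, Pi.single_apply]

lemma isHomogeneous_lin3 (v : Fin 3 → ℂ) : (lin3 v).IsHomogeneous 1 := by
  apply MvPolynomial.IsHomogeneous.sum
  intro i _
  simpa using (MvPolynomial.isHomogeneous_C _ (v i)).mul (MvPolynomial.isHomogeneous_X ℂ i)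

lemma lin2_coeff (u : Fin 2 → ℂ) (j : Fin 2) :
    MvPolynomial.coeff (Finsupp.single j 1) (lin2 u) = u j := by
  simp [lin2, MvPolynomial.coeff_sum, MvPolynomial.coeff_C_mul, MvPolynomial.coeff_X',
    Finsupp.single_left_inj, Finset.sum_ite_eq]
  fin_cases j <;> simp

lemma lin2_smul (c : ℂ) (u : Fin 2 → ℂ) : lin2 (c • u) = MvPolynomial.C c * lin2 u := by
  simp [lin2, Finset.mul_sum, MvPolynomial.C_mul, mul_assoc, mul_add]

lemma lin2_zero : lin2 (0 : Fin 2 → ℂ) = 0 := by simp [lin2]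

lemma ev3_vadd (θ : Fin 3 → S3) (x y : Fin 3 → ℂ) :
    ev3 θ (x + y) = ev3 θ x + ev3 θ y := by
  simp [ev3, add_mul, Finset.sum_add_distrib, MvPolynomial.C_add]

lemma ev3_vsmul (θ : Fin 3 → S3) (c : ℂ) (x : Fin 3 → ℂ) :
    ev3 θ (c • x) = MvPolynomial.C c * ev3 θ x := by
  simp [ev3, Finset.mul_sum, MvPolynomial.C_mul, mul_assoc]

lemma ev3_eulerD (v : Fin 3 → ℂ) : ev3 eulerD v = lin3 v := rfl

lemma ev3_isHomogeneous {θ : Fin 3 → S3} {k : ℕ} (hθ : HomDeg3 θ k) (v : Fin 3 → ℂ) :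
    (ev3 θ v).IsHomogeneous k := by
  apply MvPolynomial.IsHomogeneous.sum
  intro i _
  simpa using (MvPolynomial.isHomogeneous_C _ (v i)).mul (hθ i)

end PartB
-- ===== Part B2: homogeneous component lemmas =====
section PartB2
open MvPolynomial

variable {σ : Type*}

lemma comp_mul_homog {q : MvPolynomial σ ℂ} {m : ℕ} (hq : q.IsHomogeneous m)
    (p : MvPolynomial σ ℂ) (n : ℕ) :
    MvPolynomial.homogeneousComponent n (p * q) =
      if m ≤ n then MvPolynomial.homogeneousComponent (n - m) p * q else 0 := by
  classical
  conv_lhs => rw [← MvPolynomial.sum_homogeneousComponent p]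
  rw [Finset.sum_mul, map_sum]
  have hterm : ∀ k, MvPolynomial.homogeneousComponent n
      (MvPolynomial.homogeneousComponent k p * q) =
      if n = k + m then MvPolynomial.homogeneousComponent k p * q else 0 := by
    intro k
    exact MvPolynomial.homogeneousComponent_of_mem
      (((MvPolynomial.homogeneousComponent_isHomogeneous k p).mul hq))
  simp_rw [hterm]
  by_cases hmn : m ≤ n
  · rw [if_pos hmn]
    have step : ∀ x ∈ Finset.range (p.totalDegree + 1),
        (if n = x + m then MvPolynomial.homogeneousComponent x p * q else 0) =
        (if x = n - m then MvPolynomial.homogeneousComponent (n - m) p * q else 0) := by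
      intro x _
      by_cases h : x = n - m
      · subst h; rw [if_pos (by omega), if_pos rfl]
      · rw [if_neg (by omega), if_neg h]
    rw [Finset.sum_congr rfl step, Finset.sum_ite_eq' (Finset.range (p.totalDegree + 1)) (n - m)]
    by_cases hr : n - m ∈ Finset.range (p.totalDegree + 1)
    · rw [if_pos hr]
    · rw [if_neg hr]
      have : MvPolynomial.homogeneousComponent (n - m) p = 0 :=
        MvPolynomial.homogeneousComponent_eq_zero _ _ (by simp at hr; omega)
      rw [this, zero_mul]
  · rw [if_neg hmn]
    apply Finset.sum_eq_zero
    intro k _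
    rw [if_neg]
    omega

lemma eq_comp_of_forall {g : MvPolynomial σ ℂ} {k : ℕ}
    (h : ∀ j, j ≠ k → MvPolynomial.homogeneousComponent j g = 0) :
    g = MvPolynomial.homogeneousComponent k g := by
  classical
  conv_lhs => rw [← MvPolynomial.sum_homogeneousComponent g]
  rw [Finset.sum_eq_single k]
  · intro b _ hb; exact h b hb
  · intro hk
    rw [MvPolynomial.homogeneousComponent_eq_zero _ _ (by simp at hk; omega)]

lemma eq_zero_of_forall_comp {g : MvPolynomial σ ℂ}
    (h : ∀ j, MvPolynomial.homogeneousComponent j g = 0) : g = 0 := by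
  conv_lhs => rw [← MvPolynomial.sum_homogeneousComponent g]
  exact Finset.sum_eq_zero fun j _ => h j

/-- dividing a homogeneous polynomial by a nonzero linear form -/
lemma div_homog {l g : MvPolynomial σ ℂ} (hl1 : l.IsHomogeneous 1) (hl0 : l ≠ 0)
    {n : ℕ} (h : (l * g).IsHomogeneous n) :
    g.IsHomogeneous (n - 1) ∧ (n = 0 → g = 0) := by
  have key : ∀ j, j + 1 ≠ n → MvPolynomial.homogeneousComponent j g = 0 := by
    intro j hj
    have h1 : MvPolynomial.homogeneousComponent (j + 1) (g * l) =
        MvPolynomial.homogeneousComponent j g * l := by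
      rw [comp_mul_homog hl1 g (j + 1)]
      simp
    have h2 : MvPolynomial.homogeneousComponent (j + 1) (g * l) = 0 := by
      rw [mul_comm] at h
      rw [MvPolynomial.homogeneousComponent_of_mem h, if_neg hj]
    rw [h2] at h1
    exact (mul_eq_zero.mp h1.symm).resolve_right hl0
  constructor
  · rcases Nat.eq_zero_or_pos n with hn | hn
    · subst hn
      have : g = 0 := eq_zero_of_forall_comp fun j => key j (by omega)
      rw [this]; exact MvPolynomial.isHomogeneous_zero _ _ _
    · have : g = MvPolynomial.homogeneousComponent (n - 1) g :=
        eq_comp_of_forall fun j hj => key j (by omega)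
      rw [this]; exact MvPolynomial.homogeneousComponent_isHomogeneous _ _
  · intro hn; subst hn
    exact eq_zero_of_forall_comp fun j => key j (by omega)

/-- a linear form dividing a linear form is a constant multiple -/
lemma dvd_linear_linear {l α : MvPolynomial σ ℂ} (hl1 : l.IsHomogeneous 1) (hl0 : l ≠ 0)
    (hα : α.IsHomogeneous 1) (hdvd : l ∣ α) : ∃ c : ℂ, α = MvPolynomial.C c * l := by
  obtain ⟨g, rfl⟩ := hdvd
  have hg0 : g.IsHomogeneous 0 := by simpa using (div_homog hl1 hl0 hα).1
  have : g = MvPolynomial.C (MvPolynomial.coeff 0 g) := by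
    have h1 := MvPolynomial.homogeneousComponent_of_mem
      (MvPolynomial.mem_homogeneousSubmodule 0 g |>.mpr hg0) (m := 0)
    rw [if_pos rfl] at h1
    conv_lhs => rw [← h1, MvPolynomial.homogeneousComponent_zero]
  exact ⟨MvPolynomial.coeff 0 g, by rw [mul_comm]; rw [← this]⟩

end PartB2
-- ===== Part B3: aeval of linear forms preserves homogeneity; prime helpers =====
section PartB3
open MvPolynomial

lemma aeval_linear_isHomogeneous {σ τ : Type*} [Fintype σ] [DecidableEq σ]
    (L : σ → MvPolynomial τ ℂ) (hL : ∀ i, (L i).IsHomogeneous 1)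
    {p : MvPolynomial σ ℂ} {n : ℕ} (hp : p.IsHomogeneous n) :
    (MvPolynomial.aeval L p).IsHomogeneous n := by
  conv_lhs => rw [MvPolynomial.as_sum p]
  rw [map_sum]
  apply MvPolynomial.IsHomogeneous.sum
  intro d hd
  rw [MvPolynomial.aeval_monomial]
  have hdeg : d.degree = n := by
    have hc : MvPolynomial.coeff d p ≠ 0 := MvPolynomial.mem_support_iff.mp hd
    have := hp hc
    rw [Finsupp.degree_eq_weight_one]; exact this
  have h1 : ((algebraMap ℂ (MvPolynomial τ ℂ)) (MvPolynomial.coeff d p)).IsHomogeneous 0 :=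
    MvPolynomial.isHomogeneous_C _ _
  have h2 : (d.prod fun i k => L i ^ k).IsHomogeneous n := by
    rw [Finsupp.prod]
    have := MvPolynomial.IsHomogeneous.prod d.support (fun i => L i ^ d i) (fun i => d i)
      (fun i _ => by simpa using (hL i).pow (d i))
    rwa [← Finsupp.degree_apply, hdeg] at this
  simpa using h1.mul h2

/-- a product of pairwise non-associated primes each dividing z divides z -/
lemma prod_primes_dvd' {R : Type*} [CommMonoidWithZero R] [IsCancelMulZero R] {ι : Type*} [DecidableEq ι]
    (s : Finset ι) (f : ι → R)
    (hp : ∀ i ∈ s, Prime (f i))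
    (hass : ∀ i ∈ s, ∀ j ∈ s, i ≠ j → ¬ Associated (f i) (f j)) :
    ∀ z : R, (∀ i ∈ s, f i ∣ z) → (∏ i ∈ s, f i) ∣ z := by
  induction s using Finset.induction_on with
  | empty => intro z _; simp
  | @insert a s ha ih =>
    intro z hz
    obtain ⟨t, rfl⟩ := hz a (Finset.mem_insert_self a s)
    have hfa : Prime (f a) := hp a (Finset.mem_insert_self a s)
    have hdvdt : ∀ i ∈ s, f i ∣ t := by
      intro i hi
      have hfi : Prime (f i) := hp i (Finset.mem_insert_of_mem hi)
      have hdvd : f i ∣ f a * t := hz i (Finset.mem_insert_of_mem hi)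
      rcases hfi.dvd_mul.mp hdvd with h | h
      · exfalso
        have hne : a ≠ i := fun h' => ha (h' ▸ hi)
        exact hass i (Finset.mem_insert_of_mem hi) a (Finset.mem_insert_self a s)
          hne.symm ((hfi.associated_of_dvd hfa h))
      · exact h
    have := ih (fun i hi => hp i (Finset.mem_insert_of_mem hi))
      (fun i hi j hj hij => hass i (Finset.mem_insert_of_mem hi) j
        (Finset.mem_insert_of_mem hj) hij) t hdvdt
    rw [Finset.prod_insert ha]
    exact mul_dvd_mul_left (f a) this
  
/-- product of constant multiples of a fixed polynomial -/
lemma prod_const_mul {ι : Type*} [DecidableEq ι] {σ : Type*} (s : Finset ι)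
    (g : ι → MvPolynomial σ ℂ) (l : MvPolynomial σ ℂ)
    (h : ∀ i ∈ s, ∃ c : ℂ, c ≠ 0 ∧ g i = MvPolynomial.C c * l) :
    ∃ c : ℂ, c ≠ 0 ∧ (∏ i ∈ s, g i) = MvPolynomial.C c * l ^ s.card := by
  induction s using Finset.induction_on with
  | empty => exact ⟨1, one_ne_zero, by simp⟩
  | @insert a s ha ih =>
    obtain ⟨c, hc0, hc⟩ := h a (Finset.mem_insert_self a s)
    obtain ⟨c', hc'0, hc'⟩ := ih (fun i hi => h i (Finset.mem_insert_of_mem hi))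
    refine ⟨c * c', mul_ne_zero hc0 hc'0, ?_⟩
    rw [Finset.prod_insert ha, Finset.card_insert_of_notMem ha, hc, hc', map_mul]
    ring

end PartB3
-- ===== Part C: restriction maps =====
section PartC
open MvPolynomial

/-- restriction map S3 → S2 determined by the basis b of the plane -/
def rho (b : Fin 2 → Fin 3 → ℂ) : S3 →ₐ[ℂ] S2 :=
  MvPolynomial.aeval (fun i => lin2 (fun j => b j i))

/-- section S2 → S3 determined by the dual vectors m -/
def sig (m : Fin 2 → Fin 3 → ℂ) : S2 →ₐ[ℂ] S3 :=
  MvPolynomial.aeval (fun j => lin3 (m j))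

lemma lin3_addv (x y : Fin 3 → ℂ) : lin3 (x + y) = lin3 x + lin3 y := by
  simp [lin3, add_mul, Finset.sum_add_distrib, MvPolynomial.C_add]

lemma lin2_single (j : Fin 2) : lin2 (fun k => if j = k then 1 else 0) = MvPolynomial.X j := by
  fin_cases j <;> simp [lin2]

lemma rho_lin3 (b : Fin 2 → Fin 3 → ℂ) (w : Fin 3 → ℂ) :
    rho b (lin3 w) = lin2 (restrForm b w) := by
  simp only [rho, lin3, map_sum, map_mul, MvPolynomial.aeval_C, MvPolynomial.aeval_X,
    lin2, restrForm]
  simp only [MvPolynomial.algebraMap_eq, Finset.mul_sum, Finset.sum_mul]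
  rw [Finset.sum_comm]
  refine Finset.sum_congr rfl fun j _ => Finset.sum_congr rfl fun i _ => by
    ring

lemma rho_X (b : Fin 2 → Fin 3 → ℂ) (i : Fin 3) :
    rho b (MvPolynomial.X i) = lin2 (fun j => b j i) := by
  simp [rho]

lemma sig_lin2 (m : Fin 2 → Fin 3 → ℂ) (u : Fin 2 → ℂ) :
    sig m (lin2 u) = lin3 (u 0 • m 0 + u 1 • m 1) := by
  simp only [sig, lin2, map_sum, map_mul, MvPolynomial.aeval_C, MvPolynomial.aeval_X]
  rw [lin3_addv, lin3_smul, lin3_smul]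
  simp [Fin.sum_univ_two]

lemma rho_ev3 (b : Fin 2 → Fin 3 → ℂ) (θ : Fin 3 → S3) (w : Fin 3 → ℂ) :
    rho b (ev3 θ w) = ∑ i, MvPolynomial.C (w i) * rho b (θ i) := by
  simp [ev3, map_sum, map_mul, MvPolynomial.algebraMap_eq]

lemma rho_isHomogeneous (b : Fin 2 → Fin 3 → ℂ) {p : S3} {n : ℕ}
    (hp : p.IsHomogeneous n) : (rho b p).IsHomogeneous n := by
  apply aeval_linear_isHomogeneous
  · intro i
    apply MvPolynomial.IsHomogeneous.sum
    intro j _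
    simpa using (MvPolynomial.isHomogeneous_C _ _).mul (MvPolynomial.isHomogeneous_X ℂ j)
  · exact hp

lemma sig_isHomogeneous (m : Fin 2 → Fin 3 → ℂ) {p : S2} {n : ℕ}
    (hp : p.IsHomogeneous n) : (sig m p).IsHomogeneous n := by
  apply aeval_linear_isHomogeneous
  · exact fun j => isHomogeneous_lin3 (m j)
  · exact hp

end PartC
-- ===== Part C2 =====
section PartC2
open MvPolynomial

variable {v : Fin 3 → ℂ} {b : Fin 2 → Fin 3 → ℂ} {m : Fin 2 → Fin 3 → ℂ}

lemma rho_sig (hm : ∀ j k, dotProduct (m j) (b k) = if j = k then 1 else 0)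
    (q : S2) : rho b (sig m q) = q := by
  have : (rho b).comp (sig m) = AlgHom.id ℂ S2 := by
    apply MvPolynomial.algHom_ext
    intro j
    simp only [AlgHom.comp_apply, AlgHom.id_apply, sig, MvPolynomial.aeval_X]
    rw [rho_lin3]
    have : restrForm b (m j) = fun k => if j = k then 1 else 0 := by
      funext k
      have := hm j k
      simpa [restrForm, dotProduct] using this
    rw [this, lin2_single]
  exact congrFun (congrArg (fun f => f.toFun) this) q

/-- evaluation of a covector on a vector of polynomials in S2 -/
def evV3 (c : Fin 3 → ℂ) (V : Fin 3 → S2) : S2 := ∑ i, MvPolynomial.C (c i) * V i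

lemma evV3_vsmul (l : ℂ) (c : Fin 3 → ℂ) (V : Fin 3 → S2) :
    evV3 (l • c) V = MvPolynomial.C l * evV3 c V := by
  simp [evV3, Finset.mul_sum, MvPolynomial.C_mul, mul_assoc]

lemma evV3_vanish (hv : v ≠ 0) (hb : LinearIndependent ℂ b)
    (hvb : ∀ j, dotProduct v (b j) = 0)
    (V : Fin 3 → S2) (hV : evV3 v V = 0)
    (c : Fin 3 → ℂ) (hc : ∀ k, dotProduct c (b k) = 0) : evV3 c V = 0 := by
  obtain ⟨l, rfl⟩ := annih v hv b hb hvb c hc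
  rw [evV3_vsmul, hV, mul_zero]

lemma rho_ev3' (b : Fin 2 → Fin 3 → ℂ) (θ : Fin 3 → S3) (w : Fin 3 → ℂ) :
    rho b (ev3 θ w) = evV3 w (fun i => rho b (θ i)) := rho_ev3 b θ w

/-- kernel of rho is generated by lin3 v -/
lemma ker_rho (hv : v ≠ 0) (hb : LinearIndependent ℂ b)
    (hvb : ∀ j, dotProduct v (b j) = 0)
    (hm : ∀ j k, dotProduct (m j) (b k) = if j = k then 1 else 0)
    (p : S3) (hp : rho b p = 0) : lin3 v ∣ p := by
  have key : ∀ p : S3, lin3 v ∣ p - sig m (rho b p) := by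
    intro p
    induction p using MvPolynomial.induction_on with
    | C a => simp [MvPolynomial.algHom_C]
    | add p q hp hq =>
      have : p + q - sig m (rho b (p + q)) = (p - sig m (rho b p)) + (q - sig m (rho b q)) := by
        rw [map_add, map_add]; ring
      rw [this]; exact dvd_add hp hq
    | mul_X p i hp =>
      have hXi : lin3 v ∣ MvPolynomial.X i - sig m (rho b (MvPolynomial.X i)) := by
        rw [rho_X, sig_lin2]
        have h1 : MvPolynomial.X i = lin3 (Pi.single i 1) := (lin3_single i).symm
        rw [h1]
        have hsub : lin3 (Pi.single i 1) - lin3 (b 0 i • m 0 + b 1 i • m 1) =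
            lin3 ((Pi.single i 1 : Fin 3 → ℂ) - (b 0 i • m 0 + b 1 i • m 1)) := by
          have := lin3_addv ((Pi.single i 1 : Fin 3 → ℂ) - (b 0 i • m 0 + b 1 i • m 1))
            (b 0 i • m 0 + b 1 i • m 1)
          simp only [sub_add_cancel] at this
          rw [this]; ring
        rw [hsub]
        have hc : ∀ k, dotProduct
            ((Pi.single i 1 : Fin 3 → ℂ) - (b 0 i • m 0 + b 1 i • m 1)) (b k) = 0 := by
          intro k
          have h0 := hm 0 k
          have h1' := hm 1 k
          have hsingle : dotProduct (Pi.single i 1 : Fin 3 → ℂ) (b k) = b k i := by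
            simp [dotProduct, Pi.single_apply, Finset.sum_ite_eq]
          rw [sub_dotProduct, add_dotProduct, smul_dotProduct,
            smul_dotProduct, h0, h1', hsingle]
          fin_cases k <;> simp
        obtain ⟨l, hl⟩ := annih v hv b hb hvb _ hc
        rw [hl, lin3_smul]
        exact Dvd.intro_left _ rfl
      have : p * MvPolynomial.X i - sig m (rho b (p * MvPolynomial.X i)) =
          (p - sig m (rho b p)) * MvPolynomial.X i +
          sig m (rho b p) * (MvPolynomial.X i - sig m (rho b (MvPolynomial.X i))) := by
        rw [map_mul, map_mul]; ring
      rw [this]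
      exact dvd_add (Dvd.dvd.mul_right hp _) (Dvd.dvd.mul_left hXi _)
  have := key p
  rw [hp, map_zero, sub_zero] at this
  exact this

end PartC2
-- ===== Part C3: the projection map and Ziegler's lemma =====
section PartC3
open MvPolynomial

variable {v : Fin 3 → ℂ} {b : Fin 2 → Fin 3 → ℂ} {m : Fin 2 → Fin 3 → ℂ}

/-- the Ziegler restriction of a derivation tangent to the plane -/
def PiMap (b m : Fin 2 → Fin 3 → ℂ) (θ : Fin 3 → S3) : Fin 2 → S2 :=
  fun j => ∑ i, MvPolynomial.C (m j i) * rho b (θ i)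

lemma evV3_addv (x y : Fin 3 → ℂ) (V : Fin 3 → S2) :
    evV3 (x + y) V = evV3 x V + evV3 y V := by
  simp [evV3, add_mul, Finset.sum_add_distrib, MvPolynomial.C_add]

lemma evV3_subv (x y : Fin 3 → ℂ) (V : Fin 3 → S2) :
    evV3 (x - y) V = evV3 x V - evV3 y V := by
  have := evV3_addv (x - y) y V
  rw [sub_add_cancel] at this
  rw [this]; ring

lemma evV3_single (i : Fin 3) (V : Fin 3 → S2) :
    evV3 (Pi.single i 1) V = V i := by
  simp [evV3, Pi.single_apply]

lemma PiMap_eq_evV3 (θ : Fin 3 → S3) (j : Fin 2) :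
    PiMap b m θ j = evV3 (m j) (fun i => rho b (θ i)) := rfl

lemma restrForm_dot (b : Fin 2 → Fin 3 → ℂ) (w : Fin 3 → ℂ) (j : Fin 2) :
    restrForm b w j = dotProduct w (b j) := rfl

lemma L1 (hv : v ≠ 0) (hb : LinearIndependent ℂ b)
    (hvb : ∀ j, dotProduct v (b j) = 0)
    (hm : ∀ j k, dotProduct (m j) (b k) = if j = k then 1 else 0)
    (θ : Fin 3 → S3) (hθv : ev3 θ v = 0) (i : Fin 3) :
    rho b (θ i) = MvPolynomial.C (b 0 i) * PiMap b m θ 0 +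
      MvPolynomial.C (b 1 i) * PiMap b m θ 1 := by
  set V : Fin 3 → S2 := fun i' => rho b (θ i') with hV
  have hVv : evV3 v V = 0 := by rw [← rho_ev3' b θ v, hθv, map_zero]
  have hrhs : MvPolynomial.C (b 0 i) * PiMap b m θ 0 + MvPolynomial.C (b 1 i) * PiMap b m θ 1
      = evV3 (b 0 i • m 0 + b 1 i • m 1) V := by
    rw [evV3_addv, evV3_vsmul, evV3_vsmul, PiMap_eq_evV3, PiMap_eq_evV3]
  have hlhs : V i = evV3 (Pi.single i 1) V := (evV3_single i V).symm
  have hdiff : evV3 ((Pi.single i 1 : Fin 3 → ℂ) - (b 0 i • m 0 + b 1 i • m 1)) V = 0 := by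
    apply evV3_vanish hv hb hvb V hVv
    intro k
    have hsingle : dotProduct (Pi.single i 1 : Fin 3 → ℂ) (b k) = b k i := by
      simp [dotProduct, Pi.single_apply, Finset.sum_ite_eq]
    rw [sub_dotProduct, add_dotProduct, smul_dotProduct,
      smul_dotProduct, hm 0 k, hm 1 k, hsingle]
    fin_cases k <;> simp
  rw [evV3_subv] at hdiff
  show V i = _
  rw [hrhs, hlhs]
  exact sub_eq_zero.mp hdiff

lemma L2 (hv : v ≠ 0) (hb : LinearIndependent ℂ b)
    (hvb : ∀ j, dotProduct v (b j) = 0)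
    (hm : ∀ j k, dotProduct (m j) (b k) = if j = k then 1 else 0)
    (θ : Fin 3 → S3) (hθv : ev3 θ v = 0) (w : Fin 3 → ℂ) :
    ev2 (PiMap b m θ) (restrForm b w) = rho b (ev3 θ w) := by
  set V : Fin 3 → S2 := fun i' => rho b (θ i') with hV
  have hVv : evV3 v V = 0 := by rw [← rho_ev3' b θ v, hθv, map_zero]
  set u := restrForm b w with hu
  have hlhs : ev2 (PiMap b m θ) u = evV3 (u 0 • m 0 + u 1 • m 1) V := by
    rw [evV3_addv, evV3_vsmul, evV3_vsmul, ← PiMap_eq_evV3, ← PiMap_eq_evV3]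
    simp [ev2, Fin.sum_univ_two]
  have hrhs : rho b (ev3 θ w) = evV3 w V := rho_ev3' b θ w
  have hdiff : evV3 (w - (u 0 • m 0 + u 1 • m 1)) V = 0 := by
    apply evV3_vanish hv hb hvb V hVv
    intro k
    rw [sub_dotProduct, add_dotProduct, smul_dotProduct,
      smul_dotProduct, hm 0 k, hm 1 k]
    have : dotProduct w (b k) = u k := (restrForm_dot b w k).symm
    rw [this]
    fin_cases k <;> simp
  rw [evV3_subv] at hdiff
  rw [hlhs, hrhs]
  exact (sub_eq_zero.mp hdiff).symm

end PartC3
-- ===== Part C4: primality of linear forms etc. =====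
section PartC4
open MvPolynomial

lemma lin3_inj {x y : Fin 3 → ℂ} (h : lin3 x = lin3 y) : x = y := by
  funext i
  have := congrArg (MvPolynomial.coeff (Finsupp.single i 1)) h
  rwa [lin3_coeff, lin3_coeff] at this

lemma lin3_prime {w : Fin 3 → ℂ} (hw : w ≠ 0) : Prime (lin3 w) := by
  obtain ⟨b', hb', hwb'⟩ := exists_ker_basis w hw
  have hker : Ideal.span {lin3 w} = RingHom.ker (rho b' : S3 →+* S2) := by
    ext p
    rw [Ideal.mem_span_singleton, RingHom.mem_ker]
    constructor
    · rintro ⟨t, rfl⟩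
      have h0 : rho b' (lin3 w) = 0 := by
        rw [rho_lin3]
        have : restrForm b' w = 0 := by
          funext j; rw [restrForm_dot]; exact hwb' j
        rw [this, lin2_zero]
      show rho b' (lin3 w * t) = 0
      rw [map_mul, h0, zero_mul]
    · intro hp
      obtain ⟨m', hm'⟩ := exists_dual b' hb'
      have hp' : rho b' p = 0 := hp
      exact ker_rho hw hb' hwb' hm' p hp'
  have hprime : (Ideal.span {lin3 w}).IsPrime := by
    rw [hker]
    exact RingHom.ker_isPrime _
  exact (Ideal.span_singleton_prime (lin3_ne_zero hw)).mp hprime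

/-- non-proportional nonzero vectors give non-associated linear forms -/
lemma lin3_not_associated {A : Arr} {x y : Fin 3 → ℂ} (hx : x ∈ A.hyps) (hy : y ∈ A.hyps)
    (hxy : x ≠ y) : ¬ Associated (lin3 x) (lin3 y) := by
  intro hass
  have hdvd : lin3 x ∣ lin3 y := hass.dvd
  obtain ⟨c, hc⟩ := dvd_linear_linear (isHomogeneous_lin3 x) (lin3_ne_zero (A.forms_ne x hx))
    (isHomogeneous_lin3 y) hdvd
  rw [← lin3_smul] at hc
  have := lin3_inj hc
  exact hxy (A.nonprop x hx y hy ⟨c, this⟩).symm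

lemma PiMap_isHomogeneous {b m : Fin 2 → Fin 3 → ℂ} {θ : Fin 3 → S3} {k : ℕ}
    (hθ : HomDeg3 θ k) : HomDeg2 (PiMap b m θ) k := by
  intro j
  apply MvPolynomial.IsHomogeneous.sum
  intro i _
  simpa using (MvPolynomial.isHomogeneous_C _ _).mul (rho_isHomogeneous b (hθ i))

lemma PiMap_comb (b m : Fin 2 → Fin 3 → ℂ) (c d : S3) (θ η : Fin 3 → S3) :
    PiMap b m (c • θ - d • η) = rho b c • PiMap b m θ - rho b d • PiMap b m η := by
  funext j
  simp only [PiMap, Pi.smul_apply, Pi.sub_apply, smul_eq_mul, map_sub, map_mul,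
    Finset.mul_sum, ← Finset.sum_sub_distrib]
  refine Finset.sum_congr rfl fun i _ => by ring

end PartC4
-- ===== Part C5: Ziegler's lemma =====
section PartC5
open MvPolynomial

variable {v : Fin 3 → ℂ} {b : Fin 2 → Fin 3 → ℂ} {m : Fin 2 → Fin 3 → ℂ}

lemma PiMap_mem_DZ (A : Arr) (hvA : v ∈ A.hyps) (hb : LinearIndependent ℂ b)
    (hvb : ∀ j, dotProduct v (b j) = 0)
    (hm : ∀ j k, dotProduct (m j) (b k) = if j = k then 1 else 0)
    (θ : Fin 3 → S3) (hθ : ∀ w ∈ A.hyps, lin3 w ∣ ev3 θ w) (hθv : ev3 θ v = 0) :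
    PiMap b m θ ∈ DZ A v b := by
  classical
  have hv : v ≠ 0 := A.forms_ne v hvA
  intro w' hw' hw'v
  set u := restrForm b w' with hu
  set T : Finset (Fin 3 → ℂ) :=
    A.hyps.filter (fun x => x ≠ v ∧ ∃ c : ℂ, restrForm b x = c • u) with hT
  have hmult : multOn A v b w' = T.card := by
    rw [multOn, ← Set.ncard_coe_finset]
    congr 1
    ext x
    simp [hT, hu, Finset.coe_filter]
  have hstep1 : ∀ x ∈ T, ∃ c : ℂ, c ≠ 0 ∧ restrForm b x = c • u ∧ lin3 x ∣ ev3 θ w' := by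
    intro x hx
    rw [hT, Finset.mem_filter] at hx
    obtain ⟨hxA, hxv, c, hc⟩ := hx
    have hc0 : c ≠ 0 := by
      rintro rfl
      have h0 : ∀ k, dotProduct x (b k) = 0 := by
        intro k
        have := congrFun hc k
        simpa [restrForm_dot] using this
      obtain ⟨l, hl⟩ := annih v hv b hb hvb x h0
      exact hxv (A.nonprop v hvA x hxA ⟨l, hl⟩)
    refine ⟨c, hc0, hc, ?_⟩
    -- x = c • w' + l • v
    have hann : ∀ k, dotProduct (x - c • w') (b k) = 0 := by
      intro k
      rw [sub_dotProduct, smul_dotProduct]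
      have h1 : dotProduct x (b k) = c * u k := by
        have := congrFun hc k
        simpa [restrForm_dot] using this
      rw [h1, ← restrForm_dot]
      simp [hu, smul_eq_mul]
    obtain ⟨l, hl⟩ := annih v hv b hb hvb _ hann
    have hx' : x = c • w' + l • v := by
      have := sub_eq_iff_eq_add.mp hl
      rw [this]; ring_nf
    have hev : ev3 θ x = MvPolynomial.C c * ev3 θ w' := by
      rw [hx', ev3_vadd, ev3_vsmul, ev3_vsmul, hθv, mul_zero, add_zero]
    have hdvd : lin3 x ∣ MvPolynomial.C c * ev3 θ w' := hev ▸ hθ x hxA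
    have : MvPolynomial.C c⁻¹ * (MvPolynomial.C c * ev3 θ w') = ev3 θ w' := by
      rw [← mul_assoc, ← MvPolynomial.C_mul, inv_mul_cancel₀ hc0, MvPolynomial.C_1, one_mul]
    exact this ▸ hdvd.mul_left _
  have hprod : (∏ x ∈ T, lin3 x) ∣ ev3 θ w' := by
    apply prod_primes_dvd'
    · intro x hx
      exact lin3_prime (A.forms_ne x (Finset.mem_of_mem_filter x hx))
    · intro x hx y hy hxy
      exact lin3_not_associated (Finset.mem_of_mem_filter x hx)
        (Finset.mem_of_mem_filter y hy) hxy
    · intro x hx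
      exact (hstep1 x hx).choose_spec.2.2
  obtain ⟨g, hg⟩ := hprod
  have hcm : ∀ x ∈ T, ∃ c : ℂ, c ≠ 0 ∧ rho b (lin3 x) = MvPolynomial.C c * lin2 u := by
    intro x hx
    obtain ⟨c, hc0', hc, _⟩ := hstep1 x hx
    exact ⟨c, hc0', by rw [rho_lin3, hc, lin2_smul]⟩
  obtain ⟨c0, hc00, hc0⟩ := prod_const_mul T (fun x => rho b (lin3 x)) (lin2 u) hcm
  rw [hmult]
  have hev2 : ev2 (PiMap b m θ) u = rho b (ev3 θ w') := L2 hv hb hvb hm θ hθv w'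
  rw [hev2, hg, map_mul]
  have hmp : (∏ x ∈ T, rho b (lin3 x)) = rho b (∏ x ∈ T, lin3 x) := (map_prod _ _ _).symm
  rw [← hmp, hc0]
  exact ⟨MvPolynomial.C c0 * rho b g, by ring⟩

end PartC5
-- ===== Part D: helpers for the main argument =====
section PartD
open MvPolynomial

lemma ev3_sub (θ η : Fin 3 → S3) (v : Fin 3 → ℂ) :
    ev3 (θ - η) v = ev3 θ v - ev3 η v := by
  simp [ev3, mul_sub, Finset.sum_sub_distrib]

lemma mem_DA {A : Arr} {θ : Fin 3 → S3} :
    θ ∈ DA A ↔ ∀ w ∈ A.hyps, lin3 w ∣ ev3 θ w := Iff.rfl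

lemma rho_lin3_eq_zero {v : Fin 3 → ℂ} {b : Fin 2 → Fin 3 → ℂ}
    (hvb : ∀ j, dotProduct v (b j) = 0) : rho b (lin3 v) = 0 := by
  rw [rho_lin3]
  have : restrForm b v = 0 := by
    funext j; rw [restrForm_dot]; exact hvb j
  rw [this, lin2_zero]

lemma mem_span_quad {R M : Type*} [CommRing R] [AddCommGroup M] [Module R M]
    {p q r s x : M} (hx : x ∈ Submodule.span R ({p, q, r, s} : Set M)) :
    ∃ c₁ c₂ c₃ c₄ : R, x = c₁ • p + c₂ • q + c₃ • r + c₄ • s := by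
  rw [Submodule.mem_span_insert] at hx
  obtain ⟨c₁, y₁, hy₁, rfl⟩ := hx
  rw [Submodule.mem_span_insert] at hy₁
  obtain ⟨c₂, y₂, hy₂, rfl⟩ := hy₁
  rw [Submodule.mem_span_insert] at hy₂
  obtain ⟨c₃, y₃, hy₃, rfl⟩ := hy₂
  rw [Submodule.mem_span_singleton] at hy₃
  obtain ⟨c₄, rfl⟩ := hy₃
  exact ⟨c₁, c₂, c₃, c₄, by abel⟩

/-- dividing an element of D_H(A) by the defining form of H -/
lemma div_DA {A : Arr} {v : Fin 3 → ℂ} (hv : v ∈ A.hyps) {Δ ψ : Fin 3 → S3}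
    (hΔ : Δ ∈ DA A) (hΔv : ev3 Δ v = 0) (hψ : Δ = lin3 v • ψ) :
    ψ ∈ DA A ∧ ev3 ψ v = 0 := by
  have hv0 : v ≠ 0 := A.forms_ne v hv
  have hψv : ev3 ψ v = 0 := by
    have h1 : ev3 Δ v = lin3 v * ev3 ψ v := by rw [hψ, ev3_smul]
    rw [hΔv] at h1
    exact (mul_eq_zero.mp h1.symm).resolve_left (lin3_ne_zero hv0)
  refine ⟨fun w hw => ?_, hψv⟩
  by_cases hwv : w = v
  · subst hwv; rw [hψv]; exact dvd_zero _
  · have h1 : lin3 w ∣ lin3 v * ev3 ψ w := by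
      rw [← ev3_smul, ← hψ]; exact hΔ w hw
    rcases (lin3_prime (A.forms_ne w hw)).2.2 _ _ h1 with h | h
    · exfalso
      obtain ⟨c, hc⟩ := dvd_linear_linear (isHomogeneous_lin3 w) (lin3_ne_zero (A.forms_ne w hw))
        (isHomogeneous_lin3 v) h
      rw [← lin3_smul] at hc
      exact hwv ((A.nonprop w hw v hv ⟨c, lin3_inj hc⟩) ▸ rfl)
    · exact h

end PartD
-- ===== Part E: the key lemma =====
section PartE
open MvPolynomial

lemma mul_X_homog {p : S3} {k : ℕ} (h1 : p.IsHomogeneous (k - 1)) (h0 : k = 0 → p = 0)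
    (i : Fin 3) : (p * MvPolynomial.X i).IsHomogeneous k := by
  rcases Nat.eq_zero_or_pos k with hk | hk
  · rw [h0 hk, zero_mul]; exact MvPolynomial.isHomogeneous_zero _ _ _
  · have : k - 1 + 1 = k := by omega
    exact this ▸ h1.mul (MvPolynomial.isHomogeneous_X ℂ i)

lemma key (A : Arr) (a b d : ℕ) (hab : a ≤ b) (hbd : b < d)
    (θ₂ θ₃ φ : Fin 3 → S3) (h2 : HomDeg3 θ₂ a) (h3 : HomDeg3 θ₃ b) (hφh : HomDeg3 φ d)
    (hspan : Submodule.span S3 ({eulerD, θ₂, θ₃, φ} : Set (Fin 3 → S3)) = DA A)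
    (hmin2 : θ₂ ∉ Submodule.span S3 ({eulerD, θ₃, φ} : Set (Fin 3 → S3)))
    (f₁ f₂ f₃ α : S3) (hα0 : α ≠ 0) (hα1 : α.IsHomogeneous 1)
    (huniq : ∀ g₁ g₂ g₃ g₄ : S3,
        g₁ • eulerD + g₂ • θ₂ + g₃ • θ₃ + g₄ • φ = 0 →
        ∃ h : S3, g₁ = h * f₁ ∧ g₂ = h * f₂ ∧ g₃ = h * f₃ ∧ g₄ = h * α)
    (v : Fin 3 → ℂ) (hv : v ∈ A.hyps)
    (hv' : ZieglerExpsAre A v (a + b - d - 1) d) :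
    ∃ c : ℂ, c ≠ 0 ∧ α = MvPolynomial.C c * lin3 v := by
  classical
  have hv0 : v ≠ 0 := A.forms_ne v hv
  obtain ⟨bb, hb, hvb0, Θ₁, Θ₂, hΘ₁, hΘ₂, hspanZ, hindep⟩ := hv'
  have hvb : ∀ j, dotProduct v (bb j) = 0 := fun j => hvb0 j
  obtain ⟨mm, hm⟩ := exists_dual bb hb
  set e₁ := a + b - d - 1 with he₁
  -- generators are in D(A)
  have hED : eulerD ∈ DA A := hspan ▸ Submodule.subset_span (by simp)
  have hθ₂DA : θ₂ ∈ DA A := hspan ▸ Submodule.subset_span (by simp)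
  have hθ₃DA : θ₃ ∈ DA A := hspan ▸ Submodule.subset_span (by simp)
  -- the tangent replacements η₂, η₃
  obtain ⟨p₂, hp₂⟩ : lin3 v ∣ ev3 θ₂ v := mem_DA.mp hθ₂DA v hv
  obtain ⟨p₃, hp₃⟩ : lin3 v ∣ ev3 θ₃ v := mem_DA.mp hθ₃DA v hv
  have hp₂h := div_homog (isHomogeneous_lin3 v) (lin3_ne_zero hv0)
    (hp₂ ▸ ev3_isHomogeneous h2 v)
  have hp₃h := div_homog (isHomogeneous_lin3 v) (lin3_ne_zero hv0)
    (hp₃ ▸ ev3_isHomogeneous h3 v)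
  set η₂ : Fin 3 → S3 := θ₂ - p₂ • eulerD with hη₂def
  set η₃ : Fin 3 → S3 := θ₃ - p₃ • eulerD with hη₃def
  have hη₂v : ev3 η₂ v = 0 := by
    rw [hη₂def, ev3_sub, ev3_smul, ev3_eulerD, hp₂, mul_comm, sub_self]
  have hη₃v : ev3 η₃ v = 0 := by
    rw [hη₃def, ev3_sub, ev3_smul, ev3_eulerD, hp₃, mul_comm, sub_self]
  have hη₂DA : η₂ ∈ DA A := Submodule.sub_mem _ hθ₂DA (Submodule.smul_mem _ p₂ hED)
  have hη₃DA : η₃ ∈ DA A := Submodule.sub_mem _ hθ₃DA (Submodule.smul_mem _ p₃ hED)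
  have hη₂h : HomDeg3 η₂ a := by
    intro i
    exact (h2 i).sub (mul_X_homog hp₂h.1 hp₂h.2 i)
  have hη₃h : HomDeg3 η₃ b := by
    intro i
    exact (h3 i).sub (mul_X_homog hp₃h.1 hp₃h.2 i)
  -- their Ziegler restrictions are multiples of Θ₁
  have hkey : ∀ (η : Fin 3 → S3) (k : ℕ), η ∈ DA A → ev3 η v = 0 → HomDeg3 η k →
      e₁ ≤ k → k < d → ∃ q : S2, PiMap bb mm η = q • Θ₁ := by
    intro η k hηDA hηv hηh he₁k hkd
    have hmem : PiMap bb mm η ∈ DZ A v bb :=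
      PiMap_mem_DZ A hv hb hvb hm η (mem_DA.mp hηDA) hηv
    rw [← hspanZ] at hmem
    obtain ⟨f, g, hfg⟩ := Submodule.mem_span_pair.mp hmem
    refine ⟨MvPolynomial.homogeneousComponent (k - e₁) f, ?_⟩
    funext j
    have hj : PiMap bb mm η j = f * Θ₁ j + g * Θ₂ j := by
      have := congrFun hfg j
      simpa [Pi.add_apply, Pi.smul_apply, smul_eq_mul] using this.symm
    have hPh : (PiMap bb mm η j).IsHomogeneous k := PiMap_isHomogeneous hηh j
    have hc1 : MvPolynomial.homogeneousComponent k (PiMap bb mm η j) = PiMap bb mm η j := by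
      rw [MvPolynomial.homogeneousComponent_of_mem
        ((MvPolynomial.mem_homogeneousSubmodule _ _).mpr hPh), if_pos rfl]
    calc PiMap bb mm η j = MvPolynomial.homogeneousComponent k (PiMap bb mm η j) := hc1.symm
      _ = MvPolynomial.homogeneousComponent k (f * Θ₁ j) +
          MvPolynomial.homogeneousComponent k (g * Θ₂ j) := by rw [hj, map_add]
      _ = MvPolynomial.homogeneousComponent (k - e₁) f * Θ₁ j := by
          rw [comp_mul_homog (hΘ₁ j) f k, comp_mul_homog (hΘ₂ j) g k,
            if_pos he₁k, if_neg (by omega), add_zero]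
      _ = (MvPolynomial.homogeneousComponent (k - e₁) f • Θ₁) j := rfl
  obtain ⟨q₂, hq₂⟩ := hkey η₂ a hη₂DA hη₂v hη₂h (by omega) (by omega)
  obtain ⟨q₃, hq₃⟩ := hkey η₃ b hη₃DA hη₃v hη₃h (by omega) hbd
  -- the syzygy
  set qt₂ : S3 := sig mm q₂ with hqt₂
  set qt₃ : S3 := sig mm q₃ with hqt₃
  set Δ : Fin 3 → S3 := qt₃ • η₂ - qt₂ • η₃ with hΔdef
  have hΔv : ev3 Δ v = 0 := by
    rw [hΔdef, ev3_sub, ev3_smul, ev3_smul, hη₂v, hη₃v, mul_zero, mul_zero, sub_self]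
  have hΔDA : Δ ∈ DA A :=
    Submodule.sub_mem _ (Submodule.smul_mem _ _ hη₂DA) (Submodule.smul_mem _ _ hη₃DA)
  have hPiΔ : PiMap bb mm Δ = 0 := by
    rw [hΔdef, PiMap_comb, hq₂, hq₃, hqt₂, hqt₃, rho_sig hm, rho_sig hm]
    funext j
    simp [smul_smul, mul_comm]
  have hrhoΔ : ∀ i, rho bb (Δ i) = 0 := by
    intro i
    rw [L1 hv0 hb hvb hm Δ hΔv i, hPiΔ]
    simp
  have hΔdvd : ∀ i, lin3 v ∣ Δ i := fun i => ker_rho hv0 hb hvb hm (Δ i) (hrhoΔ i)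
  set ψ : Fin 3 → S3 := fun i => (hΔdvd i).choose with hψdef
  have hψ : Δ = lin3 v • ψ := by
    funext i
    exact (hΔdvd i).choose_spec
  obtain ⟨hψDA, hψv⟩ := div_DA hv hΔDA hΔv hψ
  rw [← hspan] at hψDA
  obtain ⟨s₁, s₂, s₃, s₄, hs⟩ := mem_span_quad hψDA
  -- the relation
  set g₁ : S3 := qt₂ * p₃ - qt₃ * p₂ - lin3 v * s₁ with hg₁def
  set g₂ : S3 := qt₃ - lin3 v * s₂ with hg₂def
  set g₃ : S3 := -qt₂ - lin3 v * s₃ with hg₃def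
  set g₄ : S3 := -(lin3 v * s₄) with hg₄def
  have hrel : g₁ • eulerD + g₂ • θ₂ + g₃ • θ₃ + g₄ • φ = 0 := by
    funext i
    have hΔi : qt₃ * (θ₂ i - p₂ * MvPolynomial.X i) - qt₂ * (θ₃ i - p₃ * MvPolynomial.X i) =
        lin3 v * (s₁ * MvPolynomial.X i + s₂ * θ₂ i + s₃ * θ₃ i + s₄ * φ i) := by
      have h1 := congrFun hψ i
      have h2 := congrFun hs i
      simp only [hΔdef, Pi.sub_apply, Pi.smul_apply, smul_eq_mul, hη₂def, hη₃def, eulerD] at h1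
      simp only [Pi.add_apply, Pi.smul_apply, smul_eq_mul, eulerD] at h2
      rw [h1, h2]
    simp only [Pi.add_apply, Pi.smul_apply, Pi.zero_apply, smul_eq_mul, eulerD,
      hg₁def, hg₂def, hg₃def, hg₄def]
    linear_combination hΔi
  obtain ⟨h, hgf₁, hgf₂, hgf₃, hgf₄⟩ := huniq g₁ g₂ g₃ g₄ hrel
  by_cases hdvdh : lin3 v ∣ h
  · -- degenerate case: leads to a contradiction with minimality
    exfalso
    obtain ⟨h', rfl⟩ := hdvdh
    have hq₂0 : q₂ = 0 := by
      have : qt₂ = -(lin3 v * (s₃ + h' * f₃)) := by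
        rw [hg₃def] at hgf₃
        linear_combination -hgf₃
      have : rho bb qt₂ = 0 := by
        rw [this, map_neg, map_mul, rho_lin3_eq_zero hvb, zero_mul, neg_zero]
      rwa [hqt₂, rho_sig hm] at this
    have hPiη₂0 : PiMap bb mm η₂ = 0 := by rw [hq₂, hq₂0, zero_smul]
    have hrhoη₂ : ∀ i, rho bb (η₂ i) = 0 := by
      intro i
      rw [L1 hv0 hb hvb hm η₂ hη₂v i, hPiη₂0]
      simp
    have hη₂dvd : ∀ i, lin3 v ∣ η₂ i := fun i => ker_rho hv0 hb hvb hm (η₂ i) (hrhoη₂ i)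
    set ψ₂ : Fin 3 → S3 := fun i => (hη₂dvd i).choose with hψ₂def
    have hψ₂ : η₂ = lin3 v • ψ₂ := funext fun i => (hη₂dvd i).choose_spec
    have hψ₂h : ∀ i, (ψ₂ i).IsHomogeneous (a - 1) ∧ (a = 0 → ψ₂ i = 0) := by
      intro i
      have : (lin3 v * ψ₂ i).IsHomogeneous a := by
        have := congrFun hψ₂ i
        simp only [Pi.smul_apply, smul_eq_mul] at this
        exact this ▸ hη₂h i
      exact div_homog (isHomogeneous_lin3 v) (lin3_ne_zero hv0) this
    obtain ⟨hψ₂DA, _⟩ := div_DA hv hη₂DA hη₂v hψ₂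
    rw [← hspan] at hψ₂DA
    obtain ⟨t₁, t₂, t₃, t₄, ht⟩ := mem_span_quad hψ₂DA
    -- ψ₂ is a multiple of the Euler derivation
    have hψ₂euler : ∃ t : S3, ∀ i, ψ₂ i = t * MvPolynomial.X i := by
      rcases Nat.eq_zero_or_pos a with ha | ha
      · exact ⟨0, fun i => by rw [(hψ₂h i).2 ha, zero_mul]⟩
      have hval : ∀ i, ψ₂ i = (if 1 ≤ a - 1 then
          MvPolynomial.homogeneousComponent (a - 1 - 1) t₁ * MvPolynomial.X i else 0) := by
        intro i
        have hti : ψ₂ i = t₁ * MvPolynomial.X i + t₂ * θ₂ i + t₃ * θ₃ i + t₄ * φ i := by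
          have := congrFun ht i
          simpa [Pi.add_apply, Pi.smul_apply, smul_eq_mul, eulerD] using this
        have hc1 : MvPolynomial.homogeneousComponent (a - 1) (ψ₂ i) = ψ₂ i := by
          rw [MvPolynomial.homogeneousComponent_of_mem
            ((MvPolynomial.mem_homogeneousSubmodule _ _).mpr (hψ₂h i).1), if_pos rfl]
        calc ψ₂ i = MvPolynomial.homogeneousComponent (a - 1) (ψ₂ i) := hc1.symm
          _ = MvPolynomial.homogeneousComponent (a - 1) (t₁ * MvPolynomial.X i)
              + MvPolynomial.homogeneousComponent (a - 1) (t₂ * θ₂ i)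
              + MvPolynomial.homogeneousComponent (a - 1) (t₃ * θ₃ i)
              + MvPolynomial.homogeneousComponent (a - 1) (t₄ * φ i) := by
                rw [hti]; simp [map_add]
          _ = (if 1 ≤ a - 1 then
              MvPolynomial.homogeneousComponent (a - 1 - 1) t₁ * MvPolynomial.X i else 0) := by
              rw [comp_mul_homog (MvPolynomial.isHomogeneous_X ℂ i) t₁ (a - 1),
                comp_mul_homog (h2 i) t₂ (a - 1), comp_mul_homog (h3 i) t₃ (a - 1),
                comp_mul_homog (hφh i) t₄ (a - 1),
                if_neg (show ¬ a ≤ a - 1 by omega), if_neg (show ¬ b ≤ a - 1 by omega),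
                if_neg (show ¬ d ≤ a - 1 by omega)]
              ring
      by_cases h1a : 1 ≤ a - 1
      · exact ⟨MvPolynomial.homogeneousComponent (a - 1 - 1) t₁,
          fun i => by rw [hval i, if_pos h1a]⟩
      · exact ⟨0, fun i => by rw [hval i, if_neg h1a, zero_mul]⟩
    obtain ⟨t, ht'⟩ := hψ₂euler
    apply hmin2
    have : θ₂ = (p₂ + lin3 v * t) • eulerD := by
      funext i
      have h1 := congrFun hψ₂ i
      simp only [Pi.smul_apply, smul_eq_mul, hη₂def, Pi.sub_apply, eulerD] at h1 ⊢
      rw [ht' i] at h1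
      linear_combination h1
    rw [this]
    exact Submodule.smul_mem _ _ (Submodule.subset_span (by simp))
  · -- main case: lin3 v divides α
    have hdvdα : lin3 v ∣ h * α := by
      refine ⟨-s₄, ?_⟩
      rw [← hgf₄, hg₄def]
      ring
    have := ((lin3_prime hv0).2.2 h α hdvdα).resolve_left hdvdh
    obtain ⟨c, hc⟩ := dvd_linear_linear (isHomogeneous_lin3 v) (lin3_ne_zero hv0) hα1 this
    refine ⟨c, ?_, hc⟩
    rintro rfl
    rw [MvPolynomial.C_0, zero_mul] at hc
    exact hα0 hc

end PartE
/-- Let `A` be a plus-one generated line arrangement in `ℂ³` with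
exponents `(a, b)` and level `d`, `a ≤ b < d`. If `H, L ∈ A` are hyperplanes such that
both Ziegler restrictions `(A^H, m^H)` and `(A^L, m^L)` have exponents `(a+b−d−1, d)`,
then `H = L`. -/
theorem stmt7 (A : Arr) (a b d : ℕ) (hab : a ≤ b) (hbd : b < d) (hpog : IsPOG A a b d)
    (v w : Fin 3 → ℂ) (hv : v ∈ A.hyps) (hw : w ∈ A.hyps)
    (hv' : ZieglerExpsAre A v (a + b - d - 1) d)
    (hw' : ZieglerExpsAre A w (a + b - d - 1) d) :
    v = w := by
  obtain ⟨θ₂, θ₃, φ, h2, h3, hφh, hspan, _, hmin2, _, _,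
    f₁, f₂, f₃, α, hα0, hα1, _, huniq⟩ := hpog
  obtain ⟨c, hc0, hc⟩ := key A a b d hab hbd θ₂ θ₃ φ h2 h3 hφh hspan hmin2
    f₁ f₂ f₃ α hα0 hα1 huniq v hv hv'
  obtain ⟨c', hc'0, hc'⟩ := key A a b d hab hbd θ₂ θ₃ φ h2 h3 hφh hspan hmin2
    f₁ f₂ f₃ α hα0 hα1 huniq w hw hw'
  have h := hc.symm.trans hc'
  have hvw : lin3 v = lin3 ((c⁻¹ * c') • w) := by
    rw [lin3_smul]
    have : lin3 v = MvPolynomial.C c⁻¹ * (MvPolynomial.C c' * lin3 w) := by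
      rw [← h, ← mul_assoc, ← MvPolynomial.C_mul, inv_mul_cancel₀ hc0, MvPolynomial.C_1, one_mul]
    rw [this, ← mul_assoc, ← MvPolynomial.C_mul]
  exact (A.nonprop w hw v hv ⟨c⁻¹ * c', lin3_inj hvw⟩)
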